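/- Let E be a field of characteristic 0 with a normalized discrete valuation v (v surjective onto ℤ on E^×), valuation ring O and uniformizer ϖ, and suppose e := v(2) ≥ 1. Let i be an integer with 1 ≤ i ≤ e, let u ∈ O^× be a unit, and set θ := 1 + ϖ^{2i−1}·u. Let K/E be a field extension containing an element s with s² = θ, and define π := (1 − s)/ϖ^{i−1} ∈ K, t := 2/ϖ^{i−1}, and π₀ := −ϖ·u. Then: t ∈ O with v(t) = e + 1 − i ≥ 1; π₀ is a uniformizer of O; π satisfies π² − t·π + π₀ = 0; and X² − t·X + π₀ is an Eisenstein polynomial over O (its non-leading coefficients lie in the maximal ideal and its constant term is not in the square of the maximal ideal). -/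

import Mathlib

/-- Let `E` be a field of characteristic `0` with a normalized discrete
valuation `v` (multiplicative on nonzero elements, ultrametric, and taking the value `1` at the
uniformizer `ϖ`, hence surjective onto `ℤ`), with valuation ring `O = {a : v a ≥ 0}`, and suppose
`e := v 2 ≥ 1`.  Let `1 ≤ i ≤ e`, let `u` be a unit of `O` (i.e. `v u = 0`), and set
`θ := 1 + ϖ^(2i−1)·u`.  Let `K/E` be a field extension containing `s` with `s² = θ`, and put
`π := (1 − s)/ϖ^(i−1)`, `t := 2/ϖ^(i−1)`, `π₀ := −ϖ·u`.  Then `t ∈ O` with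
`v t = e + 1 − i ≥ 1`; `π₀` is a uniformizer of `O` (i.e. `v π₀ = 1`); `π` satisfies the
Eisenstein equation `π² − t·π + π₀ = 0`; and `X² − t·X + π₀` is Eisenstein over `O`
(its non-leading coefficients `−t` and `π₀` have valuation `≥ 1`, and its constant term `π₀`
has valuation `< 2`, i.e. it does not lie in the square of the maximal ideal). -/
theorem stmt_0 (E K : Type*) [Field E] [CharZero E] [Field K] [Algebra E K]
    (v : E → ℤ)
    (hv_mul : ∀ a b : E, a ≠ 0 → b ≠ 0 → v (a * b) = v a + v b)
    (hv_add : ∀ a b : E, a ≠ 0 → b ≠ 0 → a + b ≠ 0 → min (v a) (v b) ≤ v (a + b))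
    (ϖ : E) (hϖ_ne : ϖ ≠ 0) (hϖ : v ϖ = 1)
    (e : ℤ) (he : v 2 = e) (he1 : 1 ≤ e)
    (i : ℕ) (hi1 : 1 ≤ i) (hie : (i : ℤ) ≤ e)
    (u : E) (hu_ne : u ≠ 0) (hu : v u = 0)
    (θ : E) (hθ : θ = 1 + ϖ ^ (2 * i - 1) * u)
    (s : K) (hs : s ^ 2 = algebraMap E K θ)
    (π : K) (hπ : π = (1 - s) / (algebraMap E K ϖ) ^ (i - 1))
    (t : E) (ht : t = 2 / ϖ ^ (i - 1))
    (π₀ : E) (hπ₀ : π₀ = -(ϖ * u)) :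
    (t ≠ 0 ∧ 0 ≤ v t ∧ v t = e + 1 - (i : ℤ) ∧ 1 ≤ v t) ∧
    (π₀ ≠ 0 ∧ v π₀ = 1) ∧
    (π ^ 2 - algebraMap E K t * π + algebraMap E K π₀ = 0) ∧
    (1 ≤ v (-t) ∧ 1 ≤ v π₀ ∧ v π₀ < 2) := by
  obtain ⟨j, rfl⟩ : ∃ j, i = j + 1 := ⟨i - 1, by omega⟩
  have h2 : (2 : E) ≠ 0 := two_ne_zero
  -- valuation of powers of ϖ
  have hpow : ∀ n : ℕ, v (ϖ ^ n) = n := by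
    intro n
    induction n with
    | zero =>
      have := hv_mul 1 1 one_ne_zero one_ne_zero
      simp at this ⊢
      linarith
    | succ n ih =>
      rw [pow_succ, hv_mul _ _ (pow_ne_zero _ hϖ_ne) hϖ_ne, ih, hϖ]
      push_cast; ring
  have hneg1 : v (-1 : E) = 0 := by
    have h1 : v (1 : E) = 0 := by
      have := hv_mul 1 1 one_ne_zero one_ne_zero
      simp at this; linarith
    have := hv_mul (-1) (-1) (by norm_num) (by norm_num)
    simp at this; linarith [this.symm.trans h1]
  have hij : (j + 1 : ℕ) - 1 = j := by omega
  have ht' : t = 2 / ϖ ^ j := by rw [ht, hij]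
  have ht_ne : t ≠ 0 := by
    rw [ht']; exact div_ne_zero h2 (pow_ne_zero _ hϖ_ne)
  have htϖ : t * ϖ ^ j = 2 := by
    rw [ht']; field_simp
  have hvt : v t = e + 1 - (j + 1 : ℕ) := by
    have := hv_mul t (ϖ ^ j) ht_ne (pow_ne_zero _ hϖ_ne)
    rw [htϖ, he, hpow] at this
    push_cast; omega
  have hπ₀_ne : π₀ ≠ 0 := by
    rw [hπ₀]; simp [hϖ_ne, hu_ne]
  have hvπ₀ : v π₀ = 1 := by
    rw [hπ₀, show -(ϖ * u) = (-1) * (ϖ * u) by ring,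
      hv_mul _ _ (by norm_num) (mul_ne_zero hϖ_ne hu_ne), hneg1,
      hv_mul _ _ hϖ_ne hu_ne, hϖ, hu]
    norm_num
  refine ⟨⟨ht_ne, by omega, hvt.trans (by push_cast; ring), by omega⟩,
    ⟨hπ₀_ne, hvπ₀⟩, ?_, ?_, by omega, by omega⟩
  · -- the Eisenstein equation
    have hmap : ∀ x : E, x ≠ 0 → algebraMap E K x ≠ 0 := fun x hx => by
      simpa using (map_ne_zero (algebraMap E K)).mpr hx
    have hϖK : algebraMap E K ϖ ≠ 0 := hmap ϖ hϖ_ne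
    have hexp : 2 * (j + 1) - 1 = 2 * j + 1 := by omega
    rw [hπ, ht', hπ₀, hij]
    have hsθ : s ^ 2 = 1 + algebraMap E K ϖ ^ (2 * j + 1) * algebraMap E K u := by
      rw [hs, hθ, hexp]; push_cast [map_add, map_mul, map_pow, map_one]; ring
    field_simp
    push_cast [map_ofNat]
    ring_nf
    rw [hsθ]
    have hinv : algebraMap E K ϖ ^ j * (algebraMap E K ϖ)⁻¹ ^ j = 1 := by
      rw [← mul_pow, mul_inv_cancel₀ hϖK, one_pow]
    linear_combination (2 * s - 2) * hinv
  · -- v (-t) ≥ 1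
    have := hv_mul (-1) t (by norm_num) ht_ne
    rw [hneg1] at this
    have : v (-t) = v t := by simpa [neg_one_mul] using this
    omega
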